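/- If R is a commutative weak nil clean ring, then the Jacobson radical J(R) equals the nilradical of R. -/

import Mathlib

/-- For a commutative weak nil clean ring, `J(R) = nilradical R`. -/
theorem jacobson_eq_nilradical_of_weakNilClean {R : Type*} [CommRing R]
    (h : ∀ x : R, ∃ e n : R, IsIdempotentElem e ∧ IsNilpotent n ∧ (x = e + n ∨ x = -e + n)) :
    (⊥ : Ideal R).jacobson = nilradical R := by
  apply le_antisymm
  · intro x hx
    obtain ⟨e, n, he, hn, hcase⟩ := h x
    have hnJ : n ∈ (⊥ : Ideal R).jacobson := by
      rw [Ideal.mem_jacobson_bot]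
      intro y
      exact ((Commute.all n y).isNilpotent_mul_right hn).isUnit_add_one
    have heJ : e ∈ (⊥ : Ideal R).jacobson := by
      rcases hcase with rfl | rfl
      · simpa using Ideal.sub_mem _ hx hnJ
      · have := Ideal.sub_mem _ hnJ hx
        simpa using this
    have he0 : e = 0 := by
      have hu : IsUnit (e * (-1) + 1) := Ideal.mem_jacobson_bot.mp heJ (-1)
      obtain ⟨u, hu⟩ := hu
      have : e * (e * (-1) + 1) = 0 := by
        have h1 : e * e = e := he.eq
        ring_nf
        linear_combination -h1
      have : e * u = 0 := by rw [hu]; exact this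
      have := congrArg (· * (↑u⁻¹ : R)) this
      simpa [mul_assoc] using this
    rcases hcase with rfl | rfl <;> simp [he0] <;> exact hn
  · intro x hx
    rw [Ideal.mem_jacobson_bot]
    intro y
    exact ((Commute.all x y).isNilpotent_mul_right (mem_nilradical.mp hx)).isUnit_add_one
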